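/- Let f_1,...,f_n : ℝ → ℝ be proper, lower semi-continuous, convex functions with ∑_i f_i strongly convex with parameter 2ξ, and let (x*, y*) be the saddle point of minimizing ∑_i f_i(x_i) subject to ∑_i x_i = C. Let (x^k, y^k) be generated by the exact DM-ADMM updates with penalty parameter ρ satisfying 0 < ρ ≤ ξ/(2(n-1)). Then the Lyapunov quantity V^k = (1/ρ)|y^{k+1} - y*|² + (ρ+ξ)‖x^k - x*‖² satisfies V^k - V^{k+1} ≥ ρ (r^k)², where r^k = ∑_i x_i^k - C. -/

import Mathlib

open Filter

lemma combo_norm_sq {E : Type*} [NormedAddCommGroup E] [InnerProductSpace ℝ E] (a b : E) (t : ℝ) :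
    ‖t • a + (1 - t) • b‖ ^ 2
      = t * ‖a‖ ^ 2 + (1 - t) * ‖b‖ ^ 2 - t * (1 - t) * ‖a - b‖ ^ 2 := by
  rw [norm_add_sq_real, norm_sub_sq_real, norm_smul, norm_smul,
    real_inner_smul_left, real_inner_smul_right]
  simp [Real.norm_eq_abs, mul_pow, sq_abs]
  ring

lemma strong_min {E : Type*} [NormedAddCommGroup E] [InnerProductSpace ℝ E]
    (g : E → ℝ) (c : ℝ)
    (hconv : ConvexOn ℝ Set.univ (fun x => g x - c * ‖x‖ ^ 2))
    (a : E) (hmin : ∀ x, g a ≤ g x) (x : E) :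
    g a + c * ‖x - a‖ ^ 2 ≤ g x := by
  have hK : Tendsto (fun t : ℝ => c * (1 - t) * ‖x - a‖ ^ 2) (nhdsWithin 0 (Set.Ioi 0))
      (nhds (c * (1 - 0) * ‖x - a‖ ^ 2)) :=
    ((continuous_const.mul (continuous_const.sub continuous_id)).mul continuous_const).tendsto 0
      |>.mono_left nhdsWithin_le_nhds
  have hle : c * (1 - 0) * ‖x - a‖ ^ 2 ≤ g x - g a := by
    refine le_of_tendsto hK ?_
    filter_upwards [Ioo_mem_nhdsGT_of_mem (by norm_num : (0:ℝ) ∈ Set.Ico 0 1)] with t ht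
    have h1 := hconv.2 (Set.mem_univ x) (Set.mem_univ a) ht.1.le (by linarith [ht.2] : (0:ℝ) ≤ 1 - t)
      (by ring)
    simp only [smul_eq_mul] at h1
    have h2 := combo_norm_sq x a t
    have h3 := hmin (t • x + (1 - t) • a)
    rw [h2] at h1
    have step : t * (c * (1 - t) * ‖x - a‖ ^ 2) ≤ t * (g x - g a) := by nlinarith [h1, h3]
    exact (mul_le_mul_iff_right₀ ht.1).mp step
  simp at hle
  linarith

lemma affine_convexOn (p q : ℝ) : ConvexOn ℝ Set.univ (fun z : ℝ => p * z + q) := by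
  refine ⟨convex_univ, fun u _ v _ a b ha hb hab => ?_⟩
  simp only [smul_eq_mul]
  exact le_of_eq (by linear_combination (-q) * hab)

lemma euc_norm_sub_sq {n : ℕ} (w z : EuclideanSpace ℝ (Fin n)) :
    ‖w - z‖ ^ 2 = ∑ i, (w i - z i) ^ 2 := by
  rw [EuclideanSpace.norm_eq, Real.sq_sqrt (Finset.sum_nonneg fun i _ => sq_nonneg _)]
  refine Finset.sum_congr rfl fun i _ => ?_
  simp [Real.norm_eq_abs, sq_abs]

set_option maxHeartbeats 1000000 in
/-- Proposition 2: Lyapunov descent inequality for exact DM-ADMM. -/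
theorem dm_admm_lyapunov_descent
    (n : ℕ) (f : Fin n → ℝ → ℝ) (C ρ ξ ystar : ℝ)
    (hρ : 0 < ρ) (hξ : 0 < ξ) (hρξ : ρ ≤ ξ / (2 * ((n : ℝ) - 1)))
    (hconv : ∀ i, ConvexOn ℝ Set.univ (f i))
    (hlsc : ∀ i, LowerSemicontinuous (f i))
    (hstrong : ConvexOn ℝ Set.univ
      (fun x : EuclideanSpace ℝ (Fin n) => (∑ i, f i (x i)) - ξ * ‖x‖ ^ 2))
    (xstar : EuclideanSpace ℝ (Fin n)) (hfeas : ∑ i, xstar i = C)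
    (hsaddle : ∀ x : EuclideanSpace ℝ (Fin n),
      (∑ i, f i (xstar i)) + ystar * (∑ i, xstar i - C)
        ≤ (∑ i, f i (x i)) + ystar * (∑ i, x i - C))
    (x : ℕ → EuclideanSpace ℝ (Fin n)) (y : ℕ → ℝ) (r : ℕ → ℝ)
    (hr : ∀ k, r k = ∑ i, x k i - C)
    (hy : ∀ k, y (k + 1) = y k + ρ * r k)
    (hupd : ∀ k, ∀ i, ∀ z : ℝ,
      f i (x (k + 1) i) + y (k + 1) * (x (k + 1) i + r k - x k i)
          + (ρ / 2) * (x (k + 1) i + r k - x k i) ^ 2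
        ≤ f i z + y (k + 1) * (z + r k - x k i)
          + (ρ / 2) * (z + r k - x k i) ^ 2) :
    ∀ k,
      ((1 / ρ) * |y (k + 1) - ystar| ^ 2 + (ρ + ξ) * ‖x k - xstar‖ ^ 2)
        - ((1 / ρ) * |y (k + 2) - ystar| ^ 2 + (ρ + ξ) * ‖x (k + 1) - xstar‖ ^ 2)
        ≥ ρ * (r k) ^ 2 := by
  -- n ≥ 2 effectively
  have hn1 : (1:ℝ) < (n:ℝ) := by
    by_contra h
    push_neg at h
    have hd : 2 * ((n:ℝ) - 1) ≤ 0 := by linarith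
    have hdiv : ξ / (2 * ((n:ℝ) - 1)) ≤ 0 := div_nonpos_iff.mpr (Or.inl ⟨hξ.le, hd⟩)
    linarith
  have hξ2 : ρ * (2 * ((n:ℝ) - 1)) ≤ ξ := (le_div_iff₀ (by linarith)).mp hρξ
  intro k
  -- abbreviations as hypotheses
  have hsv : ∑ i, x k i = C + r k := by have := hr k; linarith
  have hsu : ∑ i, x (k+1) i = C + r (k+1) := by have := hr (k+1); linarith
  -- strong convexity at saddle point : IB
  have haffE : ConvexOn ℝ Set.univ
      (fun w : EuclideanSpace ℝ (Fin n) => ystar * (∑ i, w i - C)) := by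
    refine ⟨convex_univ, fun u _ v _ a b ha hb hab => ?_⟩
    simp only [smul_eq_mul, PiLp.add_apply, PiLp.smul_apply, Finset.sum_add_distrib,
      ← Finset.mul_sum]
    exact le_of_eq (by linear_combination (ystar * C) * hab)
  have hGconv : ConvexOn ℝ Set.univ
      (fun w : EuclideanSpace ℝ (Fin n) =>
        ((∑ i, f i (w i)) + ystar * (∑ i, w i - C)) - ξ * ‖w‖ ^ 2) := by
    have e : (fun w : EuclideanSpace ℝ (Fin n) =>
        ((∑ i, f i (w i)) + ystar * (∑ i, w i - C)) - ξ * ‖w‖ ^ 2)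
        = fun w => ((∑ i, f i (w i)) - ξ * ‖w‖ ^ 2) + ystar * (∑ i, w i - C) := by
      funext w; ring
    rw [e]; exact hstrong.add haffE
  have IB0 := strong_min (fun w : EuclideanSpace ℝ (Fin n) =>
      (∑ i, f i (w i)) + ystar * (∑ i, w i - C)) ξ hGconv xstar hsaddle (x (k+1))
  simp only [hfeas, hsu] at IB0
  rw [euc_norm_sub_sq] at IB0
  -- IB0 : Fstar + ystar*(C-C) + ξ * Sx ≤ Fu + ystar*(C + r(k+1) - C)
  -- per-coordinate strong minimality : L1
  have L1 : ∀ i, f i (x (k+1) i) + y (k+1) * (x (k+1) i + r k - x k i)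
      + (ρ/2) * (x (k+1) i + r k - x k i)^2 + (ρ/2) * (xstar i - x (k+1) i)^2
      ≤ f i (xstar i) + y (k+1) * (xstar i + r k - x k i)
      + (ρ/2) * (xstar i + r k - x k i)^2 := by
    intro i
    have hgc : ConvexOn ℝ Set.univ (fun z : ℝ =>
        (f i z + y (k+1) * (z + r k - x k i) + (ρ/2) * (z + r k - x k i)^2)
          - (ρ/2) * ‖z‖ ^ 2) := by
      have e : (fun z : ℝ =>
          (f i z + y (k+1) * (z + r k - x k i) + (ρ/2) * (z + r k - x k i)^2)
            - (ρ/2) * ‖z‖ ^ 2)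
          = fun z => f i z + ((y (k+1) + ρ * (r k - x k i)) * z
              + (y (k+1) * (r k - x k i) + (ρ/2) * (r k - x k i)^2)) := by
        funext z
        simp only [Real.norm_eq_abs, sq_abs]
        ring
      rw [e]
      exact (hconv i).add (affine_convexOn _ _)
    have h := strong_min (fun z : ℝ =>
        f i z + y (k+1) * (z + r k - x k i) + (ρ/2) * (z + r k - x k i)^2) (ρ/2)
        hgc (x (k+1) i) (hupd k i) (xstar i)
    simp only [Real.norm_eq_abs, sq_abs] at h
    linarith
  have IAraw := Finset.sum_le_sum (fun i (_ : i ∈ Finset.univ) => L1 i)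
  -- sum identities
  have ea : ∑ i, (xstar i + r k - x k i) = ((n:ℝ) - 1) * r k := by
    rw [Finset.sum_sub_distrib, Finset.sum_add_distrib, Finset.sum_const, Finset.card_univ,
      Fintype.card_fin, nsmul_eq_mul, hfeas, hsv]
    ring
  have eb : ∑ i, (x (k+1) i + r k - x k i) = r (k+1) + ((n:ℝ) - 1) * r k := by
    rw [Finset.sum_sub_distrib, Finset.sum_add_distrib, Finset.sum_const, Finset.card_univ,
      Fintype.card_fin, nsmul_eq_mul, hsu, hsv]
    ring
  have ec : ∑ i, (xstar i + r k - x k i)^2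
      = (∑ i, (x k i - xstar i)^2) + ((n:ℝ) - 2) * (r k)^2 := by
    have e : ∀ i ∈ Finset.univ, (xstar i + r k - x k i)^2
        = (x k i - xstar i)^2 + (-(2 * r k)) * (x k i - xstar i) + (r k)^2 := fun i _ => by ring
    rw [Finset.sum_congr rfl e, Finset.sum_add_distrib, Finset.sum_add_distrib, ← Finset.mul_sum,
      Finset.sum_sub_distrib, hfeas, hsv, Finset.sum_const, Finset.card_univ, Fintype.card_fin,
      nsmul_eq_mul]
    ring
  have ed : ∑ i, (x (k+1) i + r k - x k i)^2
      = (∑ i, (x (k+1) i - x k i)^2) + 2 * r k * r (k+1) + ((n:ℝ) - 2) * (r k)^2 := by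
    have e : ∀ i ∈ Finset.univ, (x (k+1) i + r k - x k i)^2
        = (x (k+1) i - x k i)^2 + (2 * r k) * (x (k+1) i - x k i) + (r k)^2 := fun i _ => by ring
    rw [Finset.sum_congr rfl e, Finset.sum_add_distrib, Finset.sum_add_distrib, ← Finset.mul_sum,
      Finset.sum_sub_distrib, hsu, hsv, Finset.sum_const, Finset.card_univ, Fintype.card_fin,
      nsmul_eq_mul]
    ring
  have ee : ∑ i, (xstar i - x (k+1) i)^2 = ∑ i, (x (k+1) i - xstar i)^2 :=
    Finset.sum_congr rfl fun i _ => by ring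
  -- split the summed inequality
  have eL : ∑ i, (f i (xstar i) + y (k+1) * (xstar i + r k - x k i)
      + (ρ/2) * (xstar i + r k - x k i)^2)
      = (∑ i, f i (xstar i)) + y (k+1) * (((n:ℝ) - 1) * r k)
        + (ρ/2) * ((∑ i, (x k i - xstar i)^2) + ((n:ℝ) - 2) * (r k)^2) := by
    rw [Finset.sum_add_distrib, Finset.sum_add_distrib, ← Finset.mul_sum, ← Finset.mul_sum,
      ea, ec]
  have eR : ∑ i, (f i (x (k+1) i) + y (k+1) * (x (k+1) i + r k - x k i)
      + (ρ/2) * (x (k+1) i + r k - x k i)^2 + (ρ/2) * (xstar i - x (k+1) i)^2)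
      = (∑ i, f i (x (k+1) i)) + y (k+1) * (r (k+1) + ((n:ℝ) - 1) * r k)
        + (ρ/2) * ((∑ i, (x (k+1) i - x k i)^2) + 2 * r k * r (k+1) + ((n:ℝ) - 2) * (r k)^2)
        + (ρ/2) * (∑ i, (x (k+1) i - xstar i)^2) := by
    rw [Finset.sum_add_distrib, Finset.sum_add_distrib, Finset.sum_add_distrib,
      ← Finset.mul_sum, ← Finset.mul_sum, ← Finset.mul_sum, eb, ed, ee]
  rw [eR, eL] at IAraw
  -- Cauchy–Schwarz
  have hsub : r (k+1) - r k = ∑ i, (x (k+1) i - x k i) := by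
    rw [Finset.sum_sub_distrib, hsu, hsv]; ring
  have hCS : (r (k+1) - r k)^2 ≤ (n:ℝ) * ∑ i, (x (k+1) i - x k i)^2 := by
    rw [hsub]
    have h := Finset.sum_mul_sq_le_sq_mul_sq Finset.univ (fun _ => (1:ℝ))
      (fun i => x (k+1) i - x k i)
    simpa [Finset.card_univ] using h
  -- triangle-type bound
  have hTri : (∑ i, (x (k+1) i - x k i)^2)
      ≤ 2 * (∑ i, (x (k+1) i - xstar i)^2) + 2 * (∑ i, (x k i - xstar i)^2) := by
    have h : ∀ i ∈ Finset.univ, (x (k+1) i - x k i)^2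
        ≤ 2 * (x (k+1) i - xstar i)^2 + 2 * (x k i - xstar i)^2 := fun i _ => by
      nlinarith [sq_nonneg (x (k+1) i + x k i - 2 * xstar i)]
    calc (∑ i, (x (k+1) i - x k i)^2)
        ≤ ∑ i, (2 * (x (k+1) i - xstar i)^2 + 2 * (x k i - xstar i)^2) :=
          Finset.sum_le_sum h
      _ = 2 * (∑ i, (x (k+1) i - xstar i)^2) + 2 * (∑ i, (x k i - xstar i)^2) := by
          rw [Finset.sum_add_distrib, ← Finset.mul_sum, ← Finset.mul_sum]
  -- dual update identity
  have hy2 : y (k+2) = y (k+1) + ρ * r (k+1) := hy (k+1)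
  have key : (1/ρ) * (y (k+1) - ystar)^2 - (1/ρ) * (y (k+2) - ystar)^2
      = -2 * r (k+1) * (y (k+1) - ystar) - ρ * (r (k+1))^2 := by
    rw [hy2]
    field_simp
    ring
  -- auxiliary nonneg products
  have h1 : 0 ≤ ρ * ((n:ℝ) * (∑ i, (x (k+1) i - x k i)^2) - (r (k+1) - r k)^2) :=
    mul_nonneg hρ.le (by linarith)
  have h2 : 0 ≤ (ρ * ((n:ℝ) - 1)) * (2 * (∑ i, (x (k+1) i - xstar i)^2)
      + 2 * (∑ i, (x k i - xstar i)^2) - (∑ i, (x (k+1) i - x k i)^2)) :=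
    mul_nonneg (mul_nonneg hρ.le (by linarith)) (by linarith)
  have h3 : 0 ≤ (ξ - 2 * ρ * ((n:ℝ) - 1)) * ((∑ i, (x (k+1) i - xstar i)^2)
      + (∑ i, (x k i - xstar i)^2)) :=
    mul_nonneg (by linarith) (by positivity)
  -- final assembly
  simp only [sq_abs]
  rw [euc_norm_sub_sq (x k) xstar, euc_norm_sub_sq (x (k+1)) xstar]
  linarith [IAraw, IB0, key, h1, h2, h3]
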